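/- arXiv:2110.13120 — 2 statements merged into one kernel-verified Lean document; each statement's English description precedes it below -/
import Mathlib

section
/- Let M be a vertically 4-connected matroid, let X be a subset of E(M) such that the restriction M|X is isomorphic to the 2-sum U_{2,4} ⊕₂ U_{2,4}, and let x be an element of X. Then M \ x is vertically 4-connected. -/
open Set Matroid

universe u

variable {α : Type u}

/-- The rank of a set `X` in a matroid `M`: the supremum of the cardinalities of the
independent subsets of `X`. -/
noncomputable def mrk (M : Matroid α) (X : Set α) : ℕ∞ :=
  ⨆ I ∈ {I : Set α | M.Indep I ∧ I ⊆ X}, I.encard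

/-- The rank `r(M)` of a matroid `M`. -/
noncomputable def mrank (M : Matroid α) : ℕ∞ := mrk M M.E

/-- The connectivity function `λ_M(X) = r(X) + r(E(M) - X) - r(M)`. -/
noncomputable def lam (M : Matroid α) (X : Set α) : ℕ∞ :=
  mrk M X + mrk M (M.E \ X) - mrank M

/-- The deletion `M \ D` of a set of elements `D` from `M`. -/
def mdel (M : Matroid α) (D : Set α) : Matroid α := M ↾ (M.E \ D)

/-- A circuit of a matroid: a minimal dependent set. -/
def MCircuit (M : Matroid α) (C : Set α) : Prop := M.Dep C ∧ ∀ D, D ⊂ C → M.Indep D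

/-- A cocircuit of a matroid: a circuit of the dual matroid. -/
def MCocircuit (M : Matroid α) (C : Set α) : Prop := MCircuit M✶ C

/-- A triangle: a 3-element circuit. -/
def IsTriangle (M : Matroid α) (T : Set α) : Prop := MCircuit M T ∧ T.encard = 3

/-- `(X, Y)` is a vertical `j`-separation of `M`: a partition of `E(M)` with
`λ_M(X) < j` and `min {r(X), r(Y)} ≥ j`. -/
def IsVSep (M : Matroid α) (j : ℕ) (X Y : Set α) : Prop :=
  X ∪ Y = M.E ∧ Disjoint X Y ∧ lam M X < (j : ℕ∞) ∧
    (j : ℕ∞) ≤ mrk M X ∧ (j : ℕ∞) ≤ mrk M Y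

/-- An exact vertical `j`-separation: one with `λ_M(X) = j - 1`. -/
def IsExactVSep (M : Matroid α) (j : ℕ) (X Y : Set α) : Prop :=
  IsVSep M j X Y ∧ lam M X = (j : ℕ∞) - 1

/-- `M` is vertically `k`-connected: it has no vertical `j`-separation for a
positive integer `j < k`. -/
def VertConn (M : Matroid α) (k : ℕ) : Prop :=
  ∀ j X Y, 0 < j → j < k → ¬ IsVSep M j X Y

/-- `(X, Y)` is a (Tutte) `j`-separation of `M`. -/
def IsSep (M : Matroid α) (j : ℕ) (X Y : Set α) : Prop :=
  X ∪ Y = M.E ∧ Disjoint X Y ∧ lam M X < (j : ℕ∞) ∧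
    (j : ℕ∞) ≤ X.encard ∧ (j : ℕ∞) ≤ Y.encard

/-- `M` is (Tutte) `k`-connected. -/
def TConn (M : Matroid α) (k : ℕ) : Prop :=
  ∀ j X Y, 0 < j → j < k → ¬ IsSep M j X Y

/-- `M` is minimally vertically 4-connected. -/
def MinVertConn4 (M : Matroid α) : Prop :=
  VertConn M 4 ∧ ∀ e ∈ M.E, ¬ VertConn (mdel M {e}) 4

/-- `M` is a simple matroid: every subset of the ground set with at most two
elements is independent (no loops and no parallel pairs). -/
def MSimple (M : Matroid α) : Prop := ∀ S ⊆ M.E, S.encard ≤ 2 → M.Indep S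

/-- `M` has a restriction isomorphic to `U_{2,4}`: a 4-element subset of the ground set
of rank 2, all of whose subsets with at most 2 elements are independent. -/
def HasU24Restriction (M : Matroid α) : Prop :=
  ∃ X ⊆ M.E, X.encard = 4 ∧ mrk M X = 2 ∧ ∀ S ⊆ X, S.encard ≤ 2 → M.Indep S

/-- The restriction `M|X` is isomorphic to `U_{2,4}`. -/
def RestrIsoU24 (M : Matroid α) (X : Set α) : Prop :=
  X ⊆ M.E ∧ X.encard = 4 ∧ mrk M X = 2 ∧ ∀ S ⊆ X, S.encard ≤ 2 → M.Indep S

/-- The restriction `M|C` is isomorphic to `U_{2,k} ⊕ U_{2,2}`: `C` is the disjoint union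
of a `k`-element rank-2 set `L` containing no loops or parallel pairs (a copy of `U_{2,k}`)
and a 2-element independent set `P` (a copy of `U_{2,2}`), with `r(C) = r(L) + r(P) = 4`,
so that the restriction is the direct sum of the two pieces. -/
def RestrIsoLinePlusPair (M : Matroid α) (C : Set α) (k : ℕ) : Prop :=
  ∃ L P, C = L ∪ P ∧ Disjoint L P ∧ L.encard = (k : ℕ∞) ∧ P.encard = 2 ∧
    M.Indep P ∧ mrk M L = 2 ∧ (∀ S ⊆ L, S.encard ≤ 2 → M.Indep S) ∧ mrk M C = 4

/-- The restriction `M|X` is isomorphic to the 2-sum `U_{2,4} ⊕₂ U_{2,4}`: `X` is the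
disjoint union of two 3-element circuits `T₁` and `T₂`, and the circuits of `M` contained
in `X` (i.e. the circuits of `M|X`) are exactly `T₁`, `T₂`, and the unions `P₁ ∪ P₂` of
2-element subsets `P₁ ⊆ T₁` and `P₂ ⊆ T₂`. -/
def RestrIsoTwoSumU24U24 (M : Matroid α) (X : Set α) : Prop :=
  X ⊆ M.E ∧ ∃ T₁ T₂ : Set α, Disjoint T₁ T₂ ∧ X = T₁ ∪ T₂ ∧
    T₁.encard = 3 ∧ T₂.encard = 3 ∧
    ∀ C ⊆ X, (MCircuit M C ↔ (C = T₁ ∨ C = T₂ ∨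
      ∃ P₁ P₂, P₁ ⊆ T₁ ∧ P₂ ⊆ T₂ ∧ P₁.encard = 2 ∧ P₂.encard = 2 ∧ C = P₁ ∪ P₂))

/-- The columns of the `GF(3)`-matrix representing `N₉`. -/
def N9Cols : Fin 9 → Fin 4 → ZMod 3 :=
  ![![1, 0, 0, 0], ![0, 1, 0, 0], ![0, 0, 1, 0], ![0, 0, 0, 1], ![0, 1, 1, -1],
    ![1, 0, 1, 1], ![1, 1, 0, 1], ![-1, 1, 1, 0], ![1, -1, 1, -1]]

/-- `M` is isomorphic to `N₉`, the 9-element rank-4 matroid represented over `GF(3)`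
by the matrix with columns `N9Cols`. -/
def IsoN9 (M : Matroid α) : Prop :=
  ∃ φ : α → Fin 9, Set.BijOn φ M.E Set.univ ∧
    ∀ I ⊆ M.E, (M.Indep I ↔ LinearIndependent (ZMod 3) fun x : I => N9Cols (φ x.1))

/-- `M` is binary: representable over the two-element field `GF(2)`, i.e. there is a
map from the ground set to a `GF(2)`-vector space under which independence in `M`
coincides with linear independence. -/
def IsBinary (M : Matroid α) : Prop :=
  ∃ (ι : Type u) (φ : α → ι → ZMod 2),
    ∀ I ⊆ M.E, (M.Indep I ↔ LinearIndependent (ZMod 2) fun x : I => φ x.1)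

/-- `M` is a uniform matroid, i.e. isomorphic to `U_{m,n}` for some `m` and `n`:
the ground set has `n` elements and a subset of the ground set is independent
exactly when it has at most `m` elements. -/
def IsUniform (M : Matroid α) : Prop :=
  ∃ m n : ℕ, M.E.encard = (n : ℕ∞) ∧ ∀ I ⊆ M.E, (M.Indep I ↔ I.encard ≤ (m : ℕ∞))

-- basic mrk lemmas
lemma le_mrk {M : Matroid α} {I S : Set α} (h : M.Indep I) (hIS : I ⊆ S) :
    I.encard ≤ mrk M S :=
  le_iSup₂_of_le I ⟨h, hIS⟩ le_rfl

lemma mrk_mono (M : Matroid α) {A B : Set α} (h : A ⊆ B) : mrk M A ≤ mrk M B :=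
  iSup₂_le fun _ hI => le_mrk hI.1 (hI.2.trans h)

lemma mrk_restrict (M : Matroid α) {S R : Set α} (hSR : S ⊆ R) :
    mrk (M ↾ R) S = mrk M S := by
  refine le_antisymm (iSup₂_le fun I hI => le_mrk ?_ hI.2) (iSup₂_le fun I hI => ?_)
  · exact ((restrict_indep_iff).mp hI.1).1
  · exact le_iSup₂_of_le I ⟨restrict_indep_iff.mpr ⟨hI.1, hI.2.trans hSR⟩, hI.2⟩ le_rfl

lemma mrk_insert_of_mem_closure {M : Matroid α} {A : Set α} {x : α}
    (hA : A ⊆ M.E) (hx : x ∈ M.closure A) : mrk M (insert x A) = mrk M A := by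
  refine le_antisymm (iSup₂_le fun I hI => ?_) (mrk_mono M (subset_insert _ _))
  obtain ⟨hI, hIsub⟩ := hI
  by_cases hxI : x ∈ I
  · set I' := I \ {x} with hI'def
    have hI'indep : M.Indep I' := hI.subset diff_subset
    have hI'A : I' ⊆ A := by
      intro y hy
      rcases hIsub hy.1 with h | h
      · exact absurd h hy.2
      · exact h
    have hxcl : x ∉ M.closure I' := hI.notMem_closure_diff_of_mem hxI
    have hnsub : ¬ A ⊆ M.closure I' := by
      intro hsub
      exact hxcl (closure_subset_closure_of_subset_closure hsub hx)
    obtain ⟨y, hyA, hycl⟩ := not_subset.mp hnsub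
    have hyI' : y ∉ I' := fun h => hycl (M.subset_closure I' hI'indep.subset_ground h)
    have hins : M.Indep (insert y I') :=
      (hI'indep.insert_indep_iff_of_notMem hyI').mpr ⟨hA hyA, hycl⟩
    have hcard : (insert y I').encard = I.encard := by
      rw [encard_insert_of_notMem hyI', hI'def, encard_diff_singleton_add_one hxI]
    calc I.encard = (insert y I').encard := hcard.symm
      _ ≤ mrk M A := le_mrk hins (insert_subset hyA hI'A)
  · exact le_mrk hI ((subset_insert_iff_of_notMem hxI).mp hIsub)

lemma mcircuit_mem_closure_diff {M : Matroid α} {C : Set α} {x : α}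
    (hC : MCircuit M C) (hx : x ∈ C) : x ∈ M.closure (C \ {x}) := by
  have hCE : C ⊆ M.E := hC.1.subset_ground
  have hI : M.Indep (C \ {x}) := hC.2 _ (sdiff_singleton_ssubset.mpr hx)
  by_contra h
  have hxd : x ∉ C \ {x} := fun h' => h'.2 rfl
  have : M.Indep (insert x (C \ {x})) :=
    (hI.insert_indep_iff_of_notMem hxd).mpr ⟨hCE hx, h⟩
  rw [insert_diff_singleton, insert_eq_self.mpr hx] at this
  exact hC.1.not_indep this

lemma vsep_symm {M : Matroid α} {j : ℕ} {A B : Set α} (h : IsVSep M j A B) :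
    IsVSep M j B A := by
  obtain ⟨hU, hD, hl, hA, hB⟩ := h
  have hEA : M.E \ A = B := by
    rw [← hU, union_diff_left, hD.symm.sdiff_eq_left]
  have hEB : M.E \ B = A := by
    rw [← hU, union_diff_right, hD.sdiff_eq_left]
  refine ⟨by rw [union_comm]; exact hU, hD.symm, ?_, hB, hA⟩
  have : lam M B = lam M A := by
    unfold lam
    rw [hEA, hEB, add_comm]
  rwa [this]

lemma lift_vsep {M : Matroid α} {x : α} {j : ℕ} {A B : Set α}
    (h : IsVSep (mdel M {x}) j A B) (hxA : x ∈ M.closure A) :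
    IsVSep M j (insert x A) B := by
  obtain ⟨hU, hD, hl, hA, hB⟩ := h
  have hground : (mdel M {x}).E = M.E \ {x} := by
    simp [mdel]
  rw [hground] at hU
  have hxE : x ∈ M.E := mem_ground_of_mem_closure hxA
  have hAsub : A ⊆ M.E \ {x} := hU ▸ subset_union_left
  have hBsub : B ⊆ M.E \ {x} := hU ▸ subset_union_right
  have hAE : A ⊆ M.E := hAsub.trans diff_subset
  have hBE : B ⊆ M.E := hBsub.trans diff_subset
  have hxB : x ∉ B := fun h => (hBsub h).2 rfl
  have hxA' : x ∉ A := fun h => (hAsub h).2 rfl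
  -- ground set facts
  have hUnion : insert x A ∪ B = M.E := by
    rw [insert_union, hU, insert_diff_singleton, insert_eq_self.mpr hxE]
  have hcompl : M.E \ insert x A = B := by
    rw [← singleton_union, ← diff_diff, ← hU, union_diff_left, hD.symm.sdiff_eq_left]
  have hcompl' : (M.E \ {x}) \ A = B := by
    rw [← hU, union_diff_left, hD.symm.sdiff_eq_left]
  -- rank facts
  have hrkA : mrk M (insert x A) = mrk M A := mrk_insert_of_mem_closure hAE hxA
  have hrkA' : mrk (mdel M {x}) A = mrk M A := mrk_restrict M hAsub
  have hrkB' : mrk (mdel M {x}) B = mrk M B := mrk_restrict M hBsub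
  have hxcl : x ∈ M.closure (M.E \ {x}) :=
    closure_subset_closure M hAsub hxA
  have hrank : mrank M = mrk M (M.E \ {x}) := by
    have := mrk_insert_of_mem_closure diff_subset hxcl
    rw [insert_diff_singleton, insert_eq_self.mpr hxE] at this
    unfold mrank
    exact this
  have hrank' : mrank (mdel M {x}) = mrk M (M.E \ {x}) := by
    unfold mrank
    rw [hground]
    exact mrk_restrict M subset_rfl
  have hlam : lam M (insert x A) = lam (mdel M {x}) A := by
    unfold lam
    rw [hcompl, hground, hcompl', hrkA, hrkA', hrkB', hrank, hrank']
  refine ⟨hUnion, ?_, ?_, ?_, ?_⟩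
  · rw [disjoint_left]
    rintro z (rfl | hz) hzB
    · exact hxB hzB
    · exact hD.le_bot ⟨hz, hzB⟩ 
  · rwa [hlam]
  · rwa [hrkA, ← hrkA']
  · rwa [← hrkB']

lemma pair_same_side {A B T : Set α} (hT : T.encard = 3) (hTsub : T ⊆ A ∪ B) :
    ∃ P ⊆ T, P.encard = 2 ∧ (P ⊆ A ∨ P ⊆ B) := by
  obtain ⟨p, q, r, hpq, hpr, hqr, rfl⟩ := encard_eq_three.mp hT
  have hp := hTsub (show p ∈ _ by simp)
  have hq := hTsub (show q ∈ _ by simp)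
  have hr := hTsub (show r ∈ _ by simp)
  rcases hp with hp | hp <;> rcases hq with hq | hq <;> rcases hr with hr | hr
  · exact ⟨{p, q}, by intro z hz; simp at hz; rcases hz with rfl | rfl <;> simp,
      encard_pair hpq, Or.inl (by intro z hz; rcases hz with rfl | hz <;> simp_all)⟩
  · exact ⟨{p, q}, by intro z hz; simp at hz; rcases hz with rfl | rfl <;> simp,
      encard_pair hpq, Or.inl (by intro z hz; rcases hz with rfl | hz <;> simp_all)⟩
  · exact ⟨{p, r}, by intro z hz; simp at hz; rcases hz with rfl | rfl <;> simp,
      encard_pair hpr, Or.inl (by intro z hz; rcases hz with rfl | hz <;> simp_all)⟩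
  · exact ⟨{q, r}, by intro z hz; simp at hz; rcases hz with rfl | rfl <;> simp,
      encard_pair hqr, Or.inr (by intro z hz; rcases hz with rfl | hz <;> simp_all)⟩
  · exact ⟨{q, r}, by intro z hz; simp at hz; rcases hz with rfl | rfl <;> simp,
      encard_pair hqr, Or.inl (by intro z hz; rcases hz with rfl | hz <;> simp_all)⟩
  · exact ⟨{p, r}, by intro z hz; simp at hz; rcases hz with rfl | rfl <;> simp,
      encard_pair hpr, Or.inr (by intro z hz; rcases hz with rfl | hz <;> simp_all)⟩
  · exact ⟨{p, q}, by intro z hz; simp at hz; rcases hz with rfl | rfl <;> simp,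
      encard_pair hpq, Or.inr (by intro z hz; rcases hz with rfl | hz <;> simp_all)⟩
  · exact ⟨{p, q}, by intro z hz; simp at hz; rcases hz with rfl | rfl <;> simp,
      encard_pair hpq, Or.inr (by intro z hz; rcases hz with rfl | hz <;> simp_all)⟩

lemma cross_closure {M : Matroid α} {x a : α} {A T₁ T₂ P : Set α}
    (hC : ∀ C ⊆ T₁ ∪ T₂, (MCircuit M C ↔ (C = T₁ ∨ C = T₂ ∨
      ∃ P₁ P₂, P₁ ⊆ T₁ ∧ P₂ ⊆ T₂ ∧ P₁.encard = 2 ∧ P₂.encard = 2 ∧ C = P₁ ∪ P₂)))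
    (hxT : x ∈ T₁) (haT : a ∈ T₁) (hax : a ≠ x) (haA : a ∈ A)
    (hPT : P ⊆ T₂) (hP2 : P.encard = 2) (hPA : P ⊆ A) : x ∈ M.closure A := by
  set C : Set α := {x, a} ∪ P with hCdef
  have hCsub : C ⊆ T₁ ∪ T₂ := by
    rintro z (hz | hz)
    · rcases hz with rfl | hz
      · exact Or.inl hxT
      · rw [mem_singleton_iff] at hz; subst hz; exact Or.inl haT
    · exact Or.inr (hPT hz)
  have hcirc : MCircuit M C :=
    (hC C hCsub).mpr (Or.inr (Or.inr ⟨{x, a}, P, by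
      rintro z (rfl | hz)
      · exact hxT
      · rw [mem_singleton_iff] at hz; subst hz; exact haT, hPT,
      encard_pair (Ne.symm hax), hP2, rfl⟩))
  have hxC : x ∈ C := Or.inl (Or.inl rfl)
  have hxcl : x ∈ M.closure (C \ {x}) := mcircuit_mem_closure_diff hcirc hxC
  have hsub2 : C \ {x} ⊆ A := by
    rintro z ⟨hz | hz, hzx⟩
    · rcases hz with rfl | hz
      · exact absurd rfl hzx
      · rw [mem_singleton_iff] at hz; subst hz; exact haA
    · exact hPA hz
  exact closure_subset_closure M hsub2 hxcl

lemma key_closure {M : Matroid α} {x : α} {A B T₁ T₂ : Set α}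
    (hAB : A ∪ B = M.E \ {x})
    (hT : Disjoint T₁ T₂) (hsub : T₁ ∪ T₂ ⊆ M.E)
    (h1 : T₁.encard = 3) (h2 : T₂.encard = 3)
    (hC : ∀ C ⊆ T₁ ∪ T₂, (MCircuit M C ↔ (C = T₁ ∨ C = T₂ ∨
      ∃ P₁ P₂, P₁ ⊆ T₁ ∧ P₂ ⊆ T₂ ∧ P₁.encard = 2 ∧ P₂.encard = 2 ∧ C = P₁ ∪ P₂)))
    (hxT : x ∈ T₁) : x ∈ M.closure A ∨ x ∈ M.closure B := by
  have hcirc1 : MCircuit M T₁ := (hC T₁ subset_union_left).mpr (Or.inl rfl)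
  have hxcl1 : x ∈ M.closure (T₁ \ {x}) := mcircuit_mem_closure_diff hcirc1 hxT
  have hT2 : (T₁ \ {x}).encard = 2 := by
    rw [encard_diff_singleton_of_mem hxT, h1]; rfl
  obtain ⟨a, b, hab, hTx⟩ := encard_eq_two.mp hT2
  have haT : a ∈ T₁ \ {x} := hTx ▸ (by simp)
  have hbT : b ∈ T₁ \ {x} := hTx ▸ (by simp)
  have memAB : ∀ z ∈ T₁ \ {x}, z ∈ A ∪ B := by
    intro z hz
    rw [hAB]
    exact ⟨hsub (Or.inl hz.1), hz.2⟩
  have hT2AB : T₂ ⊆ A ∪ B := by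
    intro z hz
    rw [hAB]
    refine ⟨hsub (Or.inr hz), ?_⟩
    rintro rfl
    exact hT.le_bot ⟨hxT, hz⟩
  rcases memAB a haT with haA | haB <;> rcases memAB b hbT with hbA | hbB
  · -- both in A
    left
    refine closure_subset_closure M ?_ hxcl1
    rw [hTx]; rintro z (rfl | hz); exact haA
    rw [mem_singleton_iff] at hz; subst hz; exact hbA
  · -- a ∈ A, b ∈ B : use a pair of T₂
    obtain ⟨P, hPT, hP2, hPA | hPB⟩ := pair_same_side h2 hT2AB
    · exact Or.inl (cross_closure hC hxT haT.1 (by simpa using haT.2) haA hPT hP2 hPA)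
    · exact Or.inr (cross_closure hC hxT hbT.1 (by simpa using hbT.2) hbB hPT hP2 hPB)
  · -- a ∈ B, b ∈ A
    obtain ⟨P, hPT, hP2, hPA | hPB⟩ := pair_same_side h2 hT2AB
    · exact Or.inl (cross_closure hC hxT hbT.1 (by simpa using hbT.2) hbA hPT hP2 hPA)
    · exact Or.inr (cross_closure hC hxT haT.1 (by simpa using haT.2) haB hPT hP2 hPB)
  · -- both in B
    right
    refine closure_subset_closure M ?_ hxcl1
    rw [hTx]; rintro z (rfl | hz); exact haB
    rw [mem_singleton_iff] at hz; subst hz; exact hbB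

/-- If `M` is a vertically 4-connected matroid, `X ⊆ E(M)` with `M|X ≅ U_{2,4} ⊕₂ U_{2,4}`,
and `x ∈ X`, then `M \ x` is vertically 4-connected. -/

theorem statement_6 (M : Matroid α) (hM : VertConn M 4) (X : Set α)
    (hX : RestrIsoTwoSumU24U24 M X) (x : α) (hx : x ∈ X) :
    VertConn (mdel M {x}) 4 := by
  intro j A B hj hj4 hsep
  obtain ⟨hXE, T₁, T₂, hT, hXeq, h1, h2, hC⟩ := hX
  subst hXeq
  have hAB : A ∪ B = M.E \ {x} := by
    have := hsep.1
    rwa [show (mdel M {x}).E = M.E \ {x} by simp [mdel]] at this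
  have hsub : T₁ ∪ T₂ ⊆ M.E := hXE
  have hxT : x ∈ T₁ ∪ T₂ := hx
  have hkey : x ∈ M.closure A ∨ x ∈ M.closure B := by
    rcases hxT with hxT | hxT
    · exact key_closure hAB hT hsub h1 h2 hC hxT
    · refine key_closure hAB hT.symm (by rwa [union_comm]) h2 h1 ?_ hxT
      intro C hCsub
      rw [hC C (by rwa [union_comm])]
      constructor
      · rintro (rfl | rfl | ⟨P₁, P₂, hP₁, hP₂, e₁, e₂, rfl⟩)
        · exact Or.inr (Or.inl rfl)
        · exact Or.inl rfl
        · exact Or.inr (Or.inr ⟨P₂, P₁, hP₂, hP₁, e₂, e₁, union_comm _ _⟩)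
      · rintro (rfl | rfl | ⟨P₁, P₂, hP₁, hP₂, e₁, e₂, rfl⟩)
        · exact Or.inr (Or.inl rfl)
        · exact Or.inl rfl
        · exact Or.inr (Or.inr ⟨P₂, P₁, hP₂, hP₁, e₂, e₁, union_comm _ _⟩)
  rcases hkey with hcl | hcl
  · exact hM j (insert x A) B hj hj4 (lift_vsep hsep hcl)
  · exact hM j (insert x B) A hj hj4 (lift_vsep (vsep_symm hsep) hcl)
end

section
/- Let k ≥ 2 be an integer and let M be a non-uniform matroid. Then M is k-connected if and only if M is vertically k-connected and has no circuits with fewer than k elements. -/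
open Set Matroid

universe u

variable {α : Type u}

section Helpers

variable {M : Matroid α} {I J X Y C D : Set α}

lemma encard_le_mrk (hI : M.Indep I) (hIX : I ⊆ X) : I.encard ≤ mrk M X :=
  le_iSup₂ (f := fun I (_ : I ∈ {I : Set α | M.Indep I ∧ I ⊆ X}) => I.encard) I ⟨hI, hIX⟩

lemma mrk_le_iff {c : ℕ∞} : mrk M X ≤ c ↔ ∀ I, M.Indep I → I ⊆ X → I.encard ≤ c := by
  rw [mrk]
  simp [iSup₂_le_iff, and_imp]

lemma mrk_eq_of_basis' (hI : M.IsBasis' I X) : mrk M X = I.encard := by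
  refine le_antisymm (mrk_le_iff.2 fun J hJ hJX => ?_) (encard_le_mrk hI.indep hI.subset)
  obtain ⟨J', hJ', hJJ'⟩ := hJ.subset_isBasis'_of_subset hJX
  exact (encard_mono hJJ').trans (hJ'.encard_eq_encard hI).le

lemma mrk_le_encard (M : Matroid α) (X : Set α) : mrk M X ≤ X.encard :=
  mrk_le_iff.2 fun _ _ h => encard_mono h

lemma mrk_le_mrank (M : Matroid α) (X : Set α) : mrk M X ≤ mrank M :=
  mrk_le_iff.2 fun I hI _ => encard_le_mrk hI hI.subset_ground

lemma lam_le_mrk (M : Matroid α) (X : Set α) : lam M X ≤ mrk M X := by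
  rw [lam]
  exact tsub_le_iff_right.2 (add_le_add_right (mrk_le_mrank M _) _)

lemma MCircuit.nonempty (h : MCircuit M C) : C.Nonempty := by
  rw [nonempty_iff_ne_empty]
  rintro rfl
  exact h.1.not_indep M.empty_indep

lemma exists_circuit_subset (hD : M.Dep D) (hfin : D.Finite) : ∃ C ⊆ D, MCircuit M C := by
  have hS : {C : Set α | C ⊆ D ∧ M.Dep C}.Finite :=
    hfin.finite_subsets.subset fun C hC => hC.1
  obtain ⟨C, hCS, hmin⟩ : ∃ C ∈ {C : Set α | C ⊆ D ∧ M.Dep C}, ∀ C' ∈ {C : Set α | C ⊆ D ∧ M.Dep C}, C' ≤ C → C = C' := by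
    obtain ⟨C, hC⟩ := hS.exists_minimal ⟨D, Subset.rfl, hD⟩
    exact ⟨C, hC.1, fun C' h1 h2 => (hC.2 h1 h2).antisymm h2⟩
  refine ⟨C, hCS.1, hCS.2, fun D' hD' => ?_⟩
  by_contra hind
  have hdep : M.Dep D' := dep_iff.2 ⟨hind, (hD'.subset.trans hCS.1).trans hD.subset_ground⟩
  exact hD'.ne (hmin D' ⟨hD'.subset.trans hCS.1, hdep⟩ hD'.subset).symm

lemma MCircuit.mrk_add_one (hC : MCircuit M C) (hfin : C.Finite) :
    mrk M C + 1 = C.encard := by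
  obtain ⟨x, hx⟩ := hC.nonempty
  have hind : M.Indep (C \ {x}) := hC.2 _ (sdiff_singleton_ssubset.2 hx)
  have h1 : C.encard ≤ mrk M C + 1 := by
    calc C.encard = (C \ {x}).encard + 1 := (encard_diff_singleton_add_one hx).symm
      _ ≤ mrk M C + 1 := add_le_add_left (encard_le_mrk hind diff_subset) 1
  refine le_antisymm ?_ h1
  obtain ⟨I, hI⟩ := M.exists_isBasis' C
  rw [mrk_eq_of_basis' hI]
  have hIC : I ⊂ C := hI.subset.ssubset_of_ne (by rintro rfl; exact hC.1.not_indep hI.indep)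
  obtain ⟨e, heC, heI⟩ := exists_of_ssubset hIC
  calc I.encard + 1 = (insert e I).encard := (encard_insert_of_notMem heI).symm
    _ ≤ C.encard := encard_mono (insert_subset heC hI.subset)

lemma exists_small_circuit (hXE : X ⊆ M.E) {j : ℕ} (hlt : mrk M X < (j : ℕ∞))
    (hj : (j : ℕ∞) ≤ X.encard) : ∃ C, MCircuit M C ∧ C.encard ≤ (j : ℕ∞) := by
  obtain ⟨I, hI⟩ := M.exists_isBasis' X
  have hIe : I.encard < (j : ℕ∞) := by rwa [mrk_eq_of_basis' hI] at hlt
  have hIfin : I.Finite := finite_of_encard_le_coe hIe.le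
  have hne : I ≠ X := by rintro rfl; exact hIe.not_ge hj
  obtain ⟨e, heX, heI⟩ := exists_of_ssubset (hI.subset.ssubset_of_ne hne)
  have hdep : M.Dep (insert e I) :=
    dep_iff.2 ⟨hI.insert_not_indep ⟨heX, heI⟩, insert_subset (hXE heX) (hI.subset.trans hXE)⟩
  obtain ⟨C, hCsub, hC⟩ := exists_circuit_subset hdep (hIfin.insert e)
  refine ⟨C, hC, ?_⟩
  calc C.encard ≤ (insert e I).encard := encard_mono hCsub
    _ ≤ I.encard + 1 := encard_insert_le _ _
    _ ≤ (j : ℕ∞) := (ENat.add_one_le_iff hIfin.encard_lt_top.ne).2 hIe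

lemma lam_symm (hXY : X ∪ Y = M.E) (hdj : Disjoint X Y) : lam M Y = lam M X := by
  have h1 : M.E \ X = Y := by rw [← hXY, union_diff_left, hdj.symm.sdiff_eq_left]
  have h2 : M.E \ Y = X := by rw [← hXY, union_diff_right, hdj.sdiff_eq_left]
  rw [lam, lam, h1, h2, add_comm]

lemma mrk_lt_of_circuit_encard {c : ℕ} (hC : MCircuit M C) (hc : (c : ℕ∞) = C.encard) :
    mrk M C < (c : ℕ∞) := by
  have hfin : C.Finite := finite_of_encard_le_coe hc.ge
  have heq := hC.mrk_add_one hfin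
  rw [← hc] at heq
  have hne : mrk M C ≠ ⊤ := by
    intro h
    rw [h, top_add] at heq
    exact (ENat.coe_ne_top c).symm heq
  exact (ENat.add_one_le_iff hne).1 heq.le

lemma exists_nat_eq_of_ne_top {a : ℕ∞} (h : a ≠ ⊤) : ∃ n : ℕ, (n : ℕ∞) = a := by
  lift a to ℕ using h with n
  exact ⟨n, rfl⟩

end Helpers

/-- A non-uniform matroid is `k`-connected if and only if it is vertically `k`-connected and
has no circuits with fewer than `k` elements. -/


theorem statement_16 (k : ℕ) (hk : 2 ≤ k) (M : Matroid α) (hu : ¬ IsUniform M) :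
    TConn M k ↔ (VertConn M k ∧ ¬ ∃ C, MCircuit M C ∧ C.encard < (k : ℕ∞)) := by
  constructor
  · intro hT
    refine ⟨fun j X Y hj hjk hV => hT j X Y hj hjk
      ⟨hV.1, hV.2.1, hV.2.2.1, hV.2.2.2.1.trans (mrk_le_encard M X),
        hV.2.2.2.2.trans (mrk_le_encard M Y)⟩, ?_⟩
    rintro ⟨C, hC, hCk⟩
    have hCE : C ⊆ M.E := hC.1.subset_ground
    have hCfin : C.Finite := finite_of_encard_le_coe hCk.le
    obtain ⟨c, hc⟩ := exists_nat_eq_of_ne_top hCfin.encard_lt_top.ne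
    have hck : c < k := by rw [← hc] at hCk; exact_mod_cast hCk
    have hc1 : 0 < c := by
      have h1 : (1 : ℕ∞) ≤ C.encard := Set.one_le_encard_iff_nonempty.2 hC.nonempty
      rw [← hc] at h1
      exact_mod_cast h1
    have hlamC : lam M C < (c : ℕ∞) :=
      (lam_le_mrk M C).trans_lt (mrk_lt_of_circuit_encard hC hc)
    by_cases hbig : (c : ℕ∞) ≤ (M.E \ C).encard
    · exact hT c C (M.E \ C) hc1 hck
        ⟨union_diff_cancel hCE, disjoint_sdiff_right, hlamC, hc.le, hbig⟩
    -- small ground set case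
    push_neg at hbig
    have hEfin : M.E.Finite := by
      have h1 : (M.E \ C).Finite := finite_of_encard_le_coe hbig.le
      have h2 := h1.union hCfin
      rwa [diff_union_of_subset hCE] at h2
    obtain ⟨n, hn⟩ := exists_nat_eq_of_ne_top hEfin.encard_lt_top.ne
    have hsplit : (M.E \ C).encard + (c : ℕ∞) = (n : ℕ∞) := by
      rw [hc, hn]; exact encard_diff_add_encard_of_subset hCE
    have hnc2 : n < 2 * c := by
      have h1 : (n : ℕ∞) < (c : ℕ∞) + (c : ℕ∞) := by
        rw [← hsplit]
        exact WithTop.add_lt_add_right (ENat.coe_ne_top c) hbig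
      have h2 : (n : ℕ∞) < ((2 * c : ℕ) : ℕ∞) := by push_cast; rw [two_mul]; exact h1
      exact_mod_cast h2
    have hnk : n + 3 ≤ 2 * k := by omega
    -- rank of M is finite
    have hrlt : mrank M < ⊤ := ((mrk_le_encard M M.E).trans_lt hEfin.encard_lt_top)
    obtain ⟨r, hr⟩ := exists_nat_eq_of_ne_top hrlt.ne
    have hr' : (r : ℕ∞) = mrk M M.E := hr
    have hrn : r ≤ n := by
      have h1 := mrk_le_encard M M.E
      rw [← hr', ← hn] at h1
      exact_mod_cast h1
    -- non-uniformity gives a dependent set of size at most r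
    have hexD : ∃ D, D ⊆ M.E ∧ M.Dep D ∧ D.encard ≤ (r : ℕ∞) := by
      by_contra h
      push_neg at h
      refine hu ⟨r, n, hn.symm, fun I hIE => ⟨fun hI => ?_, fun hle => ?_⟩⟩
      · have h1 := encard_le_mrk hI hI.subset_ground
        rwa [← hr'] at h1
      · by_contra hnind
        exact ((h I hIE (dep_iff.2 ⟨hnind, hIE⟩)).trans_le hle).false
    obtain ⟨D, hDE, hDdep, hDr⟩ := hexD
    obtain ⟨C₀, hC₀D, hC₀⟩ := exists_circuit_subset hDdep (finite_of_encard_le_coe hDr)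
    have hC₀fin : C₀.Finite := (finite_of_encard_le_coe hDr).subset hC₀D
    obtain ⟨c₀, hc₀⟩ := exists_nat_eq_of_ne_top hC₀fin.encard_lt_top.ne
    have hc₀r : c₀ ≤ r := by
      have h1 := (encard_mono hC₀D).trans hDr
      rw [← hc₀] at h1
      exact_mod_cast h1
    have hc₀1 : 0 < c₀ := by
      have h1 : (1 : ℕ∞) ≤ C₀.encard := Set.one_le_encard_iff_nonempty.2 hC₀.nonempty
      rw [← hc₀] at h1
      exact_mod_cast h1
    have hC₀E : C₀ ⊆ M.E := hC₀.1.subset_ground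
    have hsplit₀ : (M.E \ C₀).encard + (c₀ : ℕ∞) = (n : ℕ∞) := by
      rw [hc₀, hn]; exact encard_diff_add_encard_of_subset hC₀E
    have hc₀n : c₀ ≤ n := by
      have h1 := encard_mono hC₀E
      rw [← hc₀, ← hn] at h1
      exact_mod_cast h1
    have hdiff₀ : (M.E \ C₀).encard = ((n - c₀ : ℕ) : ℕ∞) := by
      refine WithTop.add_right_cancel (ENat.coe_ne_top c₀) (?_ : (M.E \ C₀).encard + (c₀ : ℕ∞) = ((n - c₀ : ℕ) : ℕ∞) + (c₀ : ℕ∞))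
      rw [hsplit₀]
      exact_mod_cast (by omega : n = n - c₀ + c₀)
    have hlamC₀ : lam M C₀ < (c₀ : ℕ∞) :=
      (lam_le_mrk M C₀).trans_lt (mrk_lt_of_circuit_encard hC₀ hc₀)
    by_cases hB1 : 2 * c₀ ≤ n
    · -- small circuit C₀, big complement
      refine hT c₀ C₀ (M.E \ C₀) hc₀1 (by omega)
        ⟨union_diff_cancel hC₀E, disjoint_sdiff_right, hlamC₀, hc₀.le, ?_⟩
      rw [hdiff₀]
      exact_mod_cast (by omega : c₀ ≤ n - c₀)
    · push_neg at hB1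
      by_cases hB2a : n + 2 ≤ 2 * r
      · -- take an arbitrary set of size j = n - r + 1
        set j : ℕ := n - r + 1 with hjdef
        obtain ⟨X, hXE, hXcard⟩ := Set.exists_subset_encard_eq
          (show (j : ℕ∞) ≤ M.E.encard by rw [← hn]; exact_mod_cast (by omega : j ≤ n))
        have hsplitX : (M.E \ X).encard + (j : ℕ∞) = (n : ℕ∞) := by
          rw [← hXcard, hn]; exact encard_diff_add_encard_of_subset hXE
        have hdiffX : (M.E \ X).encard = ((n - j : ℕ) : ℕ∞) := by
          refine WithTop.add_right_cancel (ENat.coe_ne_top j) (?_ : (M.E \ X).encard + (j : ℕ∞) = ((n - j : ℕ) : ℕ∞) + (j : ℕ∞))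
          rw [hsplitX]
          exact_mod_cast (by omega : n = n - j + j)
        have hlamX : lam M X < (j : ℕ∞) := by
          have h1 : mrk M X + mrk M (M.E \ X) ≤ (n : ℕ∞) := by
            calc mrk M X + mrk M (M.E \ X) ≤ X.encard + (M.E \ X).encard :=
                  add_le_add (mrk_le_encard M X) (mrk_le_encard M _)
              _ = (n : ℕ∞) := by rw [add_comm, hXcard]; exact hsplitX
          have h2 : lam M X ≤ (n : ℕ∞) - (r : ℕ∞) := by
            rw [lam, ← hr]
            exact tsub_le_tsub_right h1 _
          rw [← ENat.coe_sub] at h2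
          exact h2.trans_lt (by exact_mod_cast (by omega : n - r < j))
        refine hT j X (M.E \ X) (by omega) (by omega)
          ⟨union_diff_cancel hXE, disjoint_sdiff_right, hlamX, hXcard.ge, ?_⟩
        rw [hdiffX]
        exact_mod_cast (by omega : j ≤ n - j)
      · -- 2r = n + 1, c₀ = r
        have h2rb : 2 * r = n + 1 := by omega
        have hc₀r' : c₀ = r := by omega
        rcases Nat.lt_or_ge r 2 with hr2 | hr2
        · -- r = 1, n = 1 : contradiction
          have hCE' : C₀ = M.E := by
            refine hEfin.eq_of_subset_of_encard_le' hC₀E ?_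
            rw [← hc₀, ← hn]
            exact_mod_cast (by omega : n ≤ c₀)
          have hlt : mrk M C₀ < (c₀ : ℕ∞) := mrk_lt_of_circuit_encard hC₀ hc₀
          rw [hCE', ← hr'] at hlt
          have : r < c₀ := by exact_mod_cast hlt
          omega
        · set j : ℕ := r - 1 with hjdef
          have hdiff₀' : (M.E \ C₀).encard = (j : ℕ∞) := by
            rw [hdiff₀]; congr 1; omega
          have hlam₀ : lam M C₀ < (j : ℕ∞) := by
            have hmrkC₀ : mrk M C₀ + 1 = (c₀ : ℕ∞) := hc₀ ▸ hC₀.mrk_add_one hC₀fin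
            have hmrkC₀' : mrk M C₀ = ((r - 1 : ℕ) : ℕ∞) := by
              refine WithTop.add_right_cancel (WithTop.one_ne_top) (?_ : mrk M C₀ + 1 = ((r - 1 : ℕ) : ℕ∞) + 1)
              rw [hmrkC₀]
              exact_mod_cast (by omega : c₀ = r - 1 + 1)
            have h1 : mrk M C₀ + mrk M (M.E \ C₀) ≤ ((r - 1 : ℕ) : ℕ∞) + ((r - 1 : ℕ) : ℕ∞) := by
              refine add_le_add hmrkC₀'.le ((mrk_le_encard M _).trans ?_)
              rw [hdiff₀']
            have h2 : lam M C₀ ≤ ((r - 1 : ℕ) : ℕ∞) + ((r - 1 : ℕ) : ℕ∞) - (r : ℕ∞) := by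
              rw [lam, ← hr]
              exact tsub_le_tsub_right h1 _
            have h3 : ((r - 1 : ℕ) : ℕ∞) + ((r - 1 : ℕ) : ℕ∞) - (r : ℕ∞)
                = ((r - 1 + (r - 1) - r : ℕ) : ℕ∞) := by
              rw [← Nat.cast_add, ← ENat.coe_sub]
            rw [h3] at h2
            exact h2.trans_lt (by exact_mod_cast (by omega : r - 1 + (r - 1) - r < j))
          refine hT j C₀ (M.E \ C₀) (by omega) (by omega)
            ⟨union_diff_cancel hC₀E, disjoint_sdiff_right, hlam₀, ?_, hdiff₀'.ge⟩
          rw [← hc₀]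
          exact_mod_cast (by omega : j ≤ c₀)
  · rintro ⟨hV, hnc⟩ j X Y hj hjk ⟨hXY, hdj, hlam, hX, hY⟩
    have hXE : X ⊆ M.E := hXY ▸ subset_union_left
    have hYE : Y ⊆ M.E := hXY ▸ subset_union_right
    by_cases hrX : (j : ℕ∞) ≤ mrk M X
    · by_cases hrY : (j : ℕ∞) ≤ mrk M Y
      · exact hV j X Y hj hjk ⟨hXY, hdj, hlam, hrX, hrY⟩
      · obtain ⟨C, hC, hCle⟩ := exists_small_circuit hYE (lt_of_not_ge hrY) hY
        exact hnc ⟨C, hC, hCle.trans_lt (by exact_mod_cast hjk)⟩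
    · obtain ⟨C, hC, hCle⟩ := exists_small_circuit hXE (lt_of_not_ge hrX) hX
      exact hnc ⟨C, hC, hCle.trans_lt (by exact_mod_cast hjk)⟩
end
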